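/- Samuel-Cahn prophet inequality with the root threshold: Let X_1,...,X_n be mutually independent non-negative integrable random variables and let ρ be the unique real satisfying ∑_{i=1}^n E[(X_i − ρ)^+] = ρ. Consider the stopping rule that inspects X_1,...,X_n in order and stops at the first index i with X_i ≥ ρ (receiving 0 if no such index exists). Then the expected reward of this rule is at least ρ. -/

import Mathlib

open MeasureTheory ProbabilityTheory

lemma sc_iIndepFun_congr_ae {Ω : Type*} [MeasurableSpace Ω] {μ : Measure Ω}
    {ι : Type*} {β : ι → Type*} {m : ∀ i, MeasurableSpace (β i)}
    {f g : ∀ i, Ω → β i} (h : iIndepFun (m := m) f μ) (hfg : ∀ i, f i =ᵐ[μ] g i) :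
    iIndepFun (m := m) g μ := by
  rw [iIndepFun_iff_measure_inter_preimage_eq_mul] at h ⊢
  intro S sets hsets
  have h1 : ∀ i, (f i ⁻¹' sets i : Set Ω) =ᵐ[μ] (g i ⁻¹' sets i) := by
    intro i
    rw [Filter.eventuallyEq_set]
    filter_upwards [hfg i] with ω hω
    simp [Set.mem_preimage, hω]
  have h2 : (⋂ i ∈ S, f i ⁻¹' sets i) =ᵐ[μ] (⋂ i ∈ S, g i ⁻¹' sets i) := by
    rw [Filter.eventuallyEq_set]
    have : ∀ᶠ ω in ae μ, ∀ i ∈ S, (ω ∈ f i ⁻¹' sets i ↔ ω ∈ g i ⁻¹' sets i) :=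
      (Filter.eventually_all_finset S).2 fun i _ => Filter.eventuallyEq_set.1 (h1 i)
    filter_upwards [this] with ω hω
    simp only [Set.mem_iInter]
    exact ⟨fun H i hi => (hω i hi).1 (H i hi), fun H i hi => (hω i hi).2 (H i hi)⟩
  rw [measure_congr h2.symm, h S hsets]
  exact Finset.prod_congr rfl fun i _ => measure_congr (h1 i)

lemma sc_key
    {Ω : Type*} [MeasurableSpace Ω] (μ : Measure Ω) [IsProbabilityMeasure μ]
    {n : ℕ} (X : Fin n → Ω → ℝ)
    (hm : ∀ i, Measurable (X i)) (hX : ∀ i, Integrable (X i) μ)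
    (hindep : ProbabilityTheory.iIndepFun X μ)
    (ρ : ℝ)
    (hρ : ∑ i, ∫ ω, max (X i ω - ρ) 0 ∂μ = ρ) :
    ρ ≤ ∫ ω,
        (if h : (Finset.univ.filter (fun i => ρ ≤ X i ω)).Nonempty then
          X ((Finset.univ.filter (fun i => ρ ≤ X i ω)).min' h) ω
        else 0) ∂μ := by
  classical
  set ψ : Fin n → Ω → ℝ := fun i ω => max (X i ω - ρ) 0 with hψdef
  set F : Fin n → Set Ω := fun i => {ω | ∀ j, j < i → X j ω < ρ} with hFdef
  have hFmeas : ∀ i, MeasurableSet (F i) := by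
    intro i
    have : F i = ⋂ j, ⋂ (_ : j < i), {ω | X j ω < ρ} := by
      ext ω; simp [hFdef]
    rw [this]
    exact MeasurableSet.iInter fun j => MeasurableSet.iInter fun _ =>
      measurableSet_lt (hm j) measurable_const
  set B : Set Ω := ⋂ i, {ω | X i ω < ρ} with hBdef
  have hBmeas : MeasurableSet B :=
    MeasurableSet.iInter fun i => measurableSet_lt (hm i) measurable_const
  -- pointwise decomposition of the reward
  have hkey : ∀ ω,
      (if h : (Finset.univ.filter (fun i => ρ ≤ X i ω)).Nonempty then
        X ((Finset.univ.filter (fun i => ρ ≤ X i ω)).min' h) ω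
      else 0)
      = Set.indicator Bᶜ (fun _ => ρ) ω + ∑ i, Set.indicator (F i) (ψ i) ω := by
    intro ω
    by_cases h : (Finset.univ.filter (fun i => ρ ≤ X i ω)).Nonempty
    · rw [dif_pos h]
      set m := (Finset.univ.filter (fun i => ρ ≤ X i ω)).min' h with hmdef
      have hmmem : m ∈ Finset.univ.filter (fun i => ρ ≤ X i ω) := Finset.min'_mem _ h
      have hρm : ρ ≤ X m ω := (Finset.mem_filter.1 hmmem).2
      have hlt : ∀ j, j < m → X j ω < ρ := by
        intro j hj
        by_contra hc
        push_neg at hc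
        have hjmem : j ∈ Finset.univ.filter (fun i => ρ ≤ X i ω) := by
          simp [hc]
        exact absurd (Finset.min'_le _ j hjmem) (not_le.2 hj)
      have hBc : ω ∈ Bᶜ := by
        simp only [hBdef, Set.mem_compl_iff, Set.mem_iInter, Set.mem_setOf_eq, not_forall]
        exact ⟨m, not_lt.2 hρm⟩
      rw [Set.indicator_of_mem hBc]
      have hFm : ω ∈ F m := fun j hj => hlt j hj
      have hsum : ∑ i, Set.indicator (F i) (ψ i) ω = X m ω - ρ := by
        rw [Finset.sum_eq_single m]
        · rw [Set.indicator_of_mem hFm]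
          exact max_eq_left (by linarith)
        · intro i _ hne
          by_cases hFi : ω ∈ F i
          · rw [Set.indicator_of_mem hFi]
            have him : i < m := by
              rcases lt_or_gt_of_ne hne with h' | h'
              · exact h'
              · exact absurd (hFi m h') (not_lt.2 hρm)
            exact max_eq_right (by linarith [hlt i him])
          · exact Set.indicator_of_notMem hFi _
        · intro hmm; exact absurd (Finset.mem_univ m) hmm
      rw [hsum]; ring
    · rw [dif_neg h]
      have hall : ∀ i, X i ω < ρ := by
        intro i
        by_contra hc
        push_neg at hc
        exact h ⟨i, by simp [hc]⟩
      have hB : ω ∈ B := Set.mem_iInter.2 fun i => hall i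
      have hBc : ω ∉ Bᶜ := by simpa using hB
      rw [Set.indicator_of_notMem hBc]
      have hzero : ∀ i, Set.indicator (F i) (ψ i) ω = 0 := by
        intro i
        by_cases hFi : ω ∈ F i
        · rw [Set.indicator_of_mem hFi]
          exact max_eq_right (by linarith [hall i])
        · exact Set.indicator_of_notMem hFi _
      simp [hzero]
  -- integrability
  have hψint : ∀ i, Integrable (ψ i) μ := fun i =>
    ((hX i).sub (integrable_const ρ)).pos_part
  have hgint : Integrable (Bᶜ.indicator fun _ => ρ) μ :=
    (integrable_const ρ).indicator hBmeas.compl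
  have hhint : ∀ i, Integrable ((F i).indicator (ψ i)) μ := fun i =>
    (hψint i).indicator (hFmeas i)
  -- independence: ∫ indicator (F i) (ψ i) = μ (F i) * ∫ ψ i
  have hprod : ∀ i, ∫ ω, (F i).indicator (ψ i) ω ∂μ
      = (μ (F i)).toReal * ∫ ω, ψ i ω ∂μ := by
    intro i
    set S : Finset (Fin n) := Finset.Iio i with hSdef
    have hdisj : Disjoint S ({i} : Finset (Fin n)) := by
      simp [hSdef, Finset.disjoint_singleton_right]
    have hIF : IndepFun (fun a (j : S) => X j a) (fun a (j : ({i} : Finset (Fin n))) => X j a) μ :=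
      hindep.indepFun_finset S {i} hdisj hm
    set s : Set ((j : S) → ℝ) := ⋂ j : S, {v | v j < ρ} with hsdef
    have hsmeas : MeasurableSet s :=
      MeasurableSet.iInter fun j => measurableSet_lt (measurable_pi_apply j) measurable_const
    set φ : ((j : S) → ℝ) → ℝ := s.indicator (fun _ => (1 : ℝ)) with hφdef
    have hφm : Measurable φ := measurable_const.indicator hsmeas
    set χ : ((j : ({i} : Finset (Fin n))) → ℝ) → ℝ :=
      fun v => max (v ⟨i, Finset.mem_singleton_self i⟩ - ρ) 0 with hχdef
    have hχm : Measurable χ :=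
      ((measurable_pi_apply _).sub measurable_const).max measurable_const
    have hcomp : IndepFun (φ ∘ fun a (j : S) => X j a)
        (χ ∘ fun a (j : ({i} : Finset (Fin n))) => X j a) μ := hIF.comp hφm hχm
    have he1 : (φ ∘ fun a (j : S) => X j a) = (F i).indicator (fun _ => (1 : ℝ)) := by
      funext ω
      simp only [Function.comp_apply, hφdef]
      by_cases hω : ω ∈ F i
      · rw [Set.indicator_of_mem hω, Set.indicator_of_mem]
        simp only [hsdef, Set.mem_iInter, Set.mem_setOf_eq]
        intro j
        exact hω j (Finset.mem_Iio.1 j.2)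
      · rw [Set.indicator_of_notMem hω, Set.indicator_of_notMem]
        simp only [hsdef, Set.mem_iInter, Set.mem_setOf_eq, not_forall]
        simp only [hFdef, Set.mem_setOf_eq, not_forall] at hω
        obtain ⟨j, hj, hjρ⟩ := hω
        exact ⟨⟨j, Finset.mem_Iio.2 hj⟩, not_lt.2 (not_lt.1 hjρ)⟩
    have he2 : (χ ∘ fun a (j : ({i} : Finset (Fin n))) => X j a) = ψ i := by
      funext ω; rfl
    rw [he1, he2] at hcomp
    have heq : (F i).indicator (ψ i)
        = fun ω => ((F i).indicator (fun _ => (1 : ℝ)) ω) * ψ i ω := by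
      funext ω
      by_cases hω : ω ∈ F i
      · simp [Set.indicator_of_mem hω]
      · simp [Set.indicator_of_notMem hω]
    rw [heq]
    have hasm1 : AEStronglyMeasurable ((F i).indicator (fun _ => (1 : ℝ))) μ :=
      (measurable_const.indicator (hFmeas i)).aestronglyMeasurable
    have hasm2 : AEStronglyMeasurable (ψ i) μ :=
      (((hm i).sub measurable_const).max measurable_const).aestronglyMeasurable
    have := hcomp.integral_mul_eq_mul_integral hasm1 hasm2
    have hmul : (fun ω => ((F i).indicator (fun _ => (1 : ℝ)) ω) * ψ i ω)
        = (F i).indicator (fun _ => (1 : ℝ)) * ψ i := rfl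
    rw [hmul, this, integral_indicator_const (1 : ℝ) (hFmeas i)]
    simp [mul_comm, Measure.real]
  -- compute the integral
  have hInt : ∫ ω,
      (if h : (Finset.univ.filter (fun i => ρ ≤ X i ω)).Nonempty then
        X ((Finset.univ.filter (fun i => ρ ≤ X i ω)).min' h) ω
      else 0) ∂μ
      = (μ Bᶜ).toReal * ρ + ∑ i, (μ (F i)).toReal * ∫ ω, ψ i ω ∂μ := by
    rw [integral_congr_ae (Filter.Eventually.of_forall hkey)]
    rw [integral_add hgint (integrable_finset_sum _ fun i _ => hhint i),
      integral_finset_sum _ fun i _ => hhint i]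
    congr 1
    · rw [integral_indicator_const ρ hBmeas.compl]; simp [mul_comm, Measure.real]
    · exact Finset.sum_congr rfl fun i _ => hprod i
  rw [hInt]
  -- final estimate
  have hψnn : ∀ i, 0 ≤ ∫ ω, ψ i ω ∂μ := fun i =>
    integral_nonneg fun ω => le_max_right _ _
  have hBF : ∀ i, B ⊆ F i := fun i ω hω j _ => Set.mem_iInter.1 hω j
  have hmono : ∀ i, (μ B).toReal ≤ (μ (F i)).toReal := fun i =>
    ENNReal.toReal_mono (measure_ne_top _ _) (measure_mono (hBF i))
  have h1 : (μ B).toReal * ρ ≤ ∑ i, (μ (F i)).toReal * ∫ ω, ψ i ω ∂μ := by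
    calc (μ B).toReal * ρ = ∑ i, (μ B).toReal * ∫ ω, ψ i ω ∂μ := by
          rw [← Finset.mul_sum]
          congr 1
          exact hρ.symm
      _ ≤ ∑ i, (μ (F i)).toReal * ∫ ω, ψ i ω ∂μ :=
          Finset.sum_le_sum fun i _ => mul_le_mul_of_nonneg_right (hmono i) (hψnn i)
  have hcompl : (μ Bᶜ).toReal = 1 - (μ B).toReal := by
    rw [measure_compl hBmeas (measure_ne_top _ _), measure_univ,
      ENNReal.toReal_sub_of_le prob_le_one ENNReal.one_ne_top, ENNReal.toReal_one]
  rw [hcompl]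
  nlinarith [h1]

theorem samuel_cahn_root_threshold
    {Ω : Type*} [MeasurableSpace Ω] (μ : Measure Ω) [IsProbabilityMeasure μ]
    {n : ℕ} (X : Fin n → Ω → ℝ)
    (hX : ∀ i, Integrable (X i) μ) (hX0 : ∀ i ω, 0 ≤ X i ω)
    (hindep : ProbabilityTheory.iIndepFun X μ)
    (ρ : ℝ) (hρpos : 0 < ρ)
    (hρ : ∑ i, ∫ ω, max (X i ω - ρ) 0 ∂μ = ρ) :
    ρ ≤ ∫ ω,
        (if h : (Finset.univ.filter (fun i => ρ ≤ X i ω)).Nonempty then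
          X ((Finset.univ.filter (fun i => ρ ≤ X i ω)).min' h) ω
        else 0) ∂μ := by
  classical
  set Y : Fin n → Ω → ℝ := fun i => (hX i).1.mk (X i) with hYdef
  have hYm : ∀ i, Measurable (Y i) := fun i => (hX i).1.stronglyMeasurable_mk.measurable
  have hae : ∀ i, X i =ᵐ[μ] Y i := fun i => (hX i).1.ae_eq_mk
  have hYint : ∀ i, Integrable (Y i) μ := fun i => (hX i).congr (hae i)
  have hYindep : ProbabilityTheory.iIndepFun Y μ :=
    sc_iIndepFun_congr_ae hindep hae
  have hρY : ∑ i, ∫ ω, max (Y i ω - ρ) 0 ∂μ = ρ := by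
    have hterm : ∀ i : Fin n, ∫ ω, max (Y i ω - ρ) 0 ∂μ = ∫ ω, max (X i ω - ρ) 0 ∂μ := by
      intro i
      refine integral_congr_ae ?_
      filter_upwards [hae i] with ω hω
      rw [hω]
    calc ∑ i, ∫ ω, max (Y i ω - ρ) 0 ∂μ = ∑ i, ∫ ω, max (X i ω - ρ) 0 ∂μ :=
          Finset.sum_congr rfl fun i _ => hterm i
      _ = ρ := hρ
  have hR : ∫ ω,
      (if h : (Finset.univ.filter (fun i => ρ ≤ X i ω)).Nonempty then
        X ((Finset.univ.filter (fun i => ρ ≤ X i ω)).min' h) ω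
      else 0) ∂μ
      = ∫ ω,
      (if h : (Finset.univ.filter (fun i => ρ ≤ Y i ω)).Nonempty then
        Y ((Finset.univ.filter (fun i => ρ ≤ Y i ω)).min' h) ω
      else 0) ∂μ := by
    refine integral_congr_ae ?_
    have hall : ∀ᵐ ω ∂μ, ∀ i, X i ω = Y i ω := ae_all_iff.2 hae
    filter_upwards [hall] with ω hω
    simp only [hω]
  rw [hR]
  exact sc_key μ Y hYm hYint hYindep ρ hρY
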